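/- arXiv:2006.04420 — 3 statements merged into one kernel-verified Lean document; each statement's English description precedes it below -/
import Mathlib

section
/- Let n ≥ 1, let M be a fixed n×n real matrix, let v, u ∈ ℝⁿ be fixed vectors, and let A₀ be an n×n real matrix such that I + A₀ is invertible. Set B = (I + A₀)⁻¹ and D = det(I + A₀). Then the map h(A) = ⟨M·(I + A)⁻¹·v, u⟩ · det(I + A), from n×n real matrices to ℝ, is Fréchet differentiable at A₀, with derivative H ↦ ( −⟨M·B·H·B·v, u⟩ + ⟨M·B·v, u⟩ · tr(B·H) ) · D. -/
attribute [local instance] Matrix.frobeniusNormedAddCommGroup Matrix.frobeniusNormedSpace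

open scoped Matrix

noncomputable def detCM (n : ℕ) : ContinuousMultilinearMap ℝ (fun _ : Fin n => (Fin n → ℝ)) ℝ :=
  { Matrix.detRowAlternating.toMultilinearMap with
    cont := by
      have : ⇑Matrix.detRowAlternating.toMultilinearMap
          = fun x : Fin n → Fin n → ℝ =>
            ∑ σ : Equiv.Perm (Fin n), (Equiv.Perm.sign σ : ℤ) • ∏ i, x (σ i) i := by
        funext x
        exact Matrix.det_apply (Matrix.of x)
      show Continuous ⇑Matrix.detRowAlternating.toMultilinearMap
      rw [this]
      exact continuous_finset_sum _ fun σ _ =>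
        (by fun_prop) }

theorem hasFDerivAt_det' {n : ℕ} (X : Matrix (Fin n) (Fin n) ℝ) :
    ∃ d' : Matrix (Fin n) (Fin n) ℝ →L[ℝ] ℝ,
      HasFDerivAt Matrix.det d' X ∧ ∀ H, d' H = (X.adjugate * H).trace := by
  classical
  let e : Matrix (Fin n) (Fin n) ℝ ≃ₗ[ℝ] (Fin n → Fin n → ℝ) :=
    { toFun := fun M => M, invFun := fun x => x,
      map_add' := fun _ _ => rfl, map_smul' := fun _ _ => rfl,
      left_inv := fun _ => rfl, right_inv := fun _ => rfl }
  let E := e.toContinuousLinearEquiv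
  have h1 : HasFDerivAt (detCM n) ((detCM n).linearDeriv (E X)) (E X) :=
    (detCM n).hasFDerivAt (E X)
  have h2 := h1.comp X E.hasFDerivAt
  refine ⟨_, h2, fun H => ?_⟩
  have hcomp : (((detCM n).linearDeriv (E X)).comp (E : Matrix (Fin n) (Fin n) ℝ →L[ℝ] (Fin n → Fin n → ℝ))) H
      = ∑ i, (X.updateRow i (H i)).det := by
    simp only [ContinuousLinearMap.comp_apply, ContinuousMultilinearMap.linearDeriv_apply]
    rfl
  refine hcomp.trans ?_
  have : ∀ i, (X.updateRow i (H i)).det = ∑ j, X.adjugate j i * H i j := by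
    intro i
    rw [← Matrix.cramer_transpose_apply, Matrix.cramer_eq_adjugate_mulVec]
    simp [Matrix.mulVec, dotProduct, ← Matrix.adjugate_transpose]
  simp only [this, Matrix.trace, Matrix.diag, Matrix.mul_apply]
  rw [Finset.sum_comm]

attribute [local instance] Matrix.frobeniusNormedRing Matrix.frobeniusNormedAlgebra

/-- The map `A ↦ ⟨M (I+A)⁻¹ v, u⟩ ⬝ det (I+A)` (Euclidean inner product on `ℝⁿ`)
is Fréchet differentiable at any `A₀` with `I + A₀` invertible, with derivative
`H ↦ (−⟨M B H B v, u⟩ + ⟨M B v, u⟩ tr (B H)) D`,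
where `B = (I + A₀)⁻¹` and `D = det (I + A₀)`. -/
theorem hasFDerivAt_mulVec_inner_det
    (n : ℕ) (hn : 1 ≤ n) (M A₀ : Matrix (Fin n) (Fin n) ℝ)
    (v u : Fin n → ℝ)
    (h : IsUnit (1 + A₀))
    (B : Matrix (Fin n) (Fin n) ℝ) (hB : B = (1 + A₀)⁻¹)
    (D : ℝ) (hD : D = (1 + A₀).det) :
    ∃ f' : Matrix (Fin n) (Fin n) ℝ →L[ℝ] ℝ,
      HasFDerivAt
        (fun A : Matrix (Fin n) (Fin n) ℝ =>
          (((M * (1 + A)⁻¹) *ᵥ v) ⬝ᵥ u) * (1 + A).det) f' A₀ ∧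
      ∀ H : Matrix (Fin n) (Fin n) ℝ,
        f' H = (-(((M * B * H * B) *ᵥ v) ⬝ᵥ u)
                + (((M * B) *ᵥ v) ⬝ᵥ u) * (B * H).trace) * D := by
  classical
  -- the linear functional X ↦ ⟨M X v, u⟩
  let L : Matrix (Fin n) (Fin n) ℝ →ₗ[ℝ] ℝ :=
    { toFun := fun X => ((M * X) *ᵥ v) ⬝ᵥ u
      map_add' := fun X Y => by
        simp [Matrix.mul_add, Matrix.add_mulVec, add_dotProduct]
      map_smul' := fun r X => by
        simp [Matrix.mul_smul, Matrix.smul_mulVec, smul_dotProduct] }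
  let Lc : Matrix (Fin n) (Fin n) ℝ →L[ℝ] ℝ := LinearMap.toContinuousLinearMap L
  -- affine part
  have haff : HasFDerivAt (fun A : Matrix (Fin n) (Fin n) ℝ => 1 + A)
      (ContinuousLinearMap.id ℝ _) A₀ := (hasFDerivAt_id A₀).const_add 1
  -- inverse part
  have hBcoe : (↑h.unit⁻¹ : Matrix (Fin n) (Fin n) ℝ) = B := by
    rw [hB, Matrix.coe_units_inv, h.unit_spec]
  have hinv0 := hasFDerivAt_ringInverse (𝕜 := ℝ) h.unit
  rw [h.unit_spec, hBcoe] at hinv0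
  have hinv : HasFDerivAt (fun A : Matrix (Fin n) (Fin n) ℝ => Ring.inverse (1 + A))
      (-(ContinuousLinearMap.mulLeftRight ℝ _ B B)) A₀ := by
    have := hinv0.comp A₀ haff
    exact this
  have hg : HasFDerivAt (fun A : Matrix (Fin n) (Fin n) ℝ =>
      Lc (Ring.inverse (1 + A)))
      (Lc.comp (-(ContinuousLinearMap.mulLeftRight ℝ _ B B))) A₀ :=
    (Lc.hasFDerivAt).comp A₀ hinv
  -- determinant part
  obtain ⟨d', hd', hd'eq⟩ := hasFDerivAt_det' (1 + A₀)
  have hdet : HasFDerivAt (fun A : Matrix (Fin n) (Fin n) ℝ => (1 + A).det)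
      (d'.comp (ContinuousLinearMap.id ℝ _)) A₀ := hd'.comp A₀ haff
  -- product
  have hprod := hg.mul hdet
  have heq : (fun A : Matrix (Fin n) (Fin n) ℝ =>
      (((M * (1 + A)⁻¹) *ᵥ v) ⬝ᵥ u) * (1 + A).det)
      = fun A => Lc (Ring.inverse (1 + A)) * (1 + A).det := by
    funext A
    rw [Matrix.nonsing_inv_eq_ringInverse]
    rfl
  rw [heq]
  refine ⟨_, hprod, ?_⟩
  intro H
  have hadj : (1 + A₀).adjugate = D • B := by
    rw [hB, hD, Matrix.inv_def, smul_smul,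
      Ring.mul_inverse_cancel _ ((Matrix.isUnit_iff_isUnit_det _).mp h), one_smul]
  have hB1 : Ring.inverse (1 + A₀) = B := by
    rw [hB, Matrix.nonsing_inv_eq_ringInverse]
  change Lc (Ring.inverse (1 + A₀)) * d' H + (1 + A₀).det * Lc (-(B * H * B)) = _
  simp only [ContinuousLinearMap.add_apply, ContinuousLinearMap.smul_apply,
    ContinuousLinearMap.comp_apply, ContinuousLinearMap.coe_id', id_eq,
    ContinuousLinearMap.neg_apply, ContinuousLinearMap.mulLeftRight_apply,
    hd'eq, hadj, hB1]
  have hLc : ∀ X, Lc X = ((M * X) *ᵥ v) ⬝ᵥ u := fun _ => rfl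
  rw [hLc, hLc, Matrix.mul_neg, Matrix.neg_mulVec, neg_dotProduct, ← hD,
    Matrix.smul_mul, Matrix.trace_smul, ← mul_assoc, ← mul_assoc]
  simp only [smul_eq_mul]
  ring
end

section
/- Let d ≥ 1, let Ω ⊆ ℝ^d be a Lebesgue-measurable set, and let F : ℝ^d → ℝ^d be injective on Ω such that at every x ∈ Ω, F has derivative within Ω equal to the invertible d×d matrix DF(x) with det DF(x) > 0. Let u : ℝ^d → ℝ^d be differentiable at every point of F(Ω) with derivative Du, and set v = u ∘ F. Then ∫_{F(Ω)} ‖Du(y)‖_F² dy = ∫_Ω ‖Dv(x) · (DF(x))⁻¹‖_F² · det(DF(x)) dx, where Dv(x) denotes the matrix of the derivative of v within Ω at x (which exists by the chain rule). -/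
open MeasureTheory

/-- The Frobenius norm of a `d × d` real matrix: the square root of the sum of the
squares of its entries. -/
noncomputable def frobNorm {d : ℕ} (X : Matrix (Fin d) (Fin d) ℝ) : ℝ :=
  Real.sqrt (∑ i, ∑ j, (X i j) ^ 2)

lemma aux_det_toEuclideanCLM {d : ℕ} (A : Matrix (Fin d) (Fin d) ℝ) :
    (Matrix.toEuclideanCLM (𝕜 := ℝ) A).det = A.det := by
  have hcoe : ((Matrix.toEuclideanCLM (𝕜 := ℝ) A :
        EuclideanSpace ℝ (Fin d) →L[ℝ] EuclideanSpace ℝ (Fin d)) :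
        EuclideanSpace ℝ (Fin d) →ₗ[ℝ] EuclideanSpace ℝ (Fin d))
      = Matrix.toLin (EuclideanSpace.basisFun (Fin d) ℝ).toBasis
          (EuclideanSpace.basisFun (Fin d) ℝ).toBasis A := by
    rw [Matrix.coe_toEuclideanCLM_eq_toEuclideanLin,
      Matrix.toEuclideanLin_eq_toLin_orthonormal]
  show LinearMap.det _ = A.det
  rw [hcoe, ← LinearMap.det_toMatrix (EuclideanSpace.basisFun (Fin d) ℝ).toBasis,
    LinearMap.toMatrix_toLin]

set_option synthInstance.maxHeartbeats 1000000 in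
/-- Pullback of the energy-dissipation integrand: for `F` injective on `Ω` with
invertible derivative matrices `DF x` (`det DF x > 0`), and `u` differentiable on
`F '' Ω` with derivative matrix `Du`, the composition `v = u ∘ F` has derivative
matrix `Dv` within `Ω` and
`∫_{F(Ω)} ‖Du‖_F² = ∫_Ω ‖Dv (DF)⁻¹‖_F² det (DF)`. -/
theorem integral_image_frobNorm_sq_eq
    (d : ℕ) (hd : 1 ≤ d)
    (Ω : Set (EuclideanSpace ℝ (Fin d))) (hΩ : MeasurableSet Ω)
    (F : EuclideanSpace ℝ (Fin d) → EuclideanSpace ℝ (Fin d))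
    (DF : EuclideanSpace ℝ (Fin d) → Matrix (Fin d) (Fin d) ℝ)
    (hinj : Set.InjOn F Ω)
    (hF : ∀ x ∈ Ω, HasFDerivWithinAt F (Matrix.toEuclideanCLM (𝕜 := ℝ) (DF x)) Ω x)
    (hDFinv : ∀ x ∈ Ω, IsUnit (DF x))
    (hdet : ∀ x ∈ Ω, 0 < (DF x).det)
    (u : EuclideanSpace ℝ (Fin d) → EuclideanSpace ℝ (Fin d))
    (Du : EuclideanSpace ℝ (Fin d) → Matrix (Fin d) (Fin d) ℝ)
    (hu : ∀ y ∈ F '' Ω, HasFDerivAt u (Matrix.toEuclideanCLM (𝕜 := ℝ) (Du y)) y)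
    (v : EuclideanSpace ℝ (Fin d) → EuclideanSpace ℝ (Fin d)) (hv : v = u ∘ F)
    (Dv : EuclideanSpace ℝ (Fin d) → Matrix (Fin d) (Fin d) ℝ)
    (hDv : ∀ x ∈ Ω, HasFDerivWithinAt v (Matrix.toEuclideanCLM (𝕜 := ℝ) (Dv x)) Ω x) :
    ∫ y in F '' Ω, (frobNorm (Du y)) ^ 2
      = ∫ x in Ω, (frobNorm (Dv x * (DF x)⁻¹)) ^ 2 * (DF x).det := by
  -- chain-rule derivative of `v` within `Ω`
  have hchain : ∀ x ∈ Ω, HasFDerivWithinAt v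
      (Matrix.toEuclideanCLM (𝕜 := ℝ) (Du (F x) * DF x)) Ω x := by
    intro x hx
    have h := (hu (F x) ⟨x, hx, rfl⟩).comp_hasFDerivWithinAt x (hF x hx)
    rw [← hv] at h
    rw [map_mul]
    exact h
  -- a.e. uniqueness of the derivative within the measurable set `Ω`
  have hzero : ∀ x ∈ Ω, HasFDerivWithinAt
      (fun _ : EuclideanSpace ℝ (Fin d) => (0 : EuclideanSpace ℝ (Fin d)))
      (Matrix.toEuclideanCLM (𝕜 := ℝ) (Dv x)
        - Matrix.toEuclideanCLM (𝕜 := ℝ) (Du (F x) * DF x)) Ω x := by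
    intro x hx
    have h := (hDv x hx).sub (hchain x hx)
    simp only [sub_self] at h
    exact h
  have happrox : ApproximatesLinearOn
      (fun _ : EuclideanSpace ℝ (Fin d) => (0 : EuclideanSpace ℝ (Fin d)))
      (0 : EuclideanSpace ℝ (Fin d) →L[ℝ] EuclideanSpace ℝ (Fin d)) Ω 0 := by
    intro x _ y _
    simp
  have hae := happrox.norm_fderiv_sub_le (μ := volume) hΩ
      (fun x => Matrix.toEuclideanCLM (𝕜 := ℝ) (Dv x)
        - Matrix.toEuclideanCLM (𝕜 := ℝ) (Du (F x) * DF x)) hzero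
  have haeq : ∀ᵐ x ∂(volume.restrict Ω), Dv x = Du (F x) * DF x := by
    filter_upwards [hae] with x hx
    have h1 : ‖Matrix.toEuclideanCLM (𝕜 := ℝ) (Dv x)
        - Matrix.toEuclideanCLM (𝕜 := ℝ) (Du (F x) * DF x)‖₊ = 0 :=
      le_antisymm (by simpa using hx) zero_le
    exact (Matrix.toEuclideanCLM (𝕜 := ℝ)).injective
      (sub_eq_zero.mp (nnnorm_eq_zero.mp h1))
  -- change of variables
  rw [integral_image_eq_integral_abs_det_fderiv_smul volume hΩ hF hinj
    (fun y => (frobNorm (Du y)) ^ 2)]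
  refine integral_congr_ae ?_
  filter_upwards [haeq, ae_restrict_mem hΩ] with x hx hxΩ
  have hDvx : Dv x * (DF x)⁻¹ = Du (F x) := by
    rw [hx, Matrix.mul_assoc, Matrix.mul_nonsing_inv _ ((hDFinv x hxΩ).map (Matrix.detMonoidHom)),
      Matrix.mul_one]
  rw [hDvx, aux_det_toEuclideanCLM, abs_of_pos (hdet x hxΩ), smul_eq_mul, mul_comm]
end

section
/- Let d ≥ 1, let Ω ⊆ ℝ^d be a Lebesgue-measurable set, and let F : ℝ^d → ℝ^d be injective on Ω such that at every x ∈ Ω, F has derivative within Ω equal to the invertible d×d matrix DF(x) with det DF(x) > 0. Let φ : ℝ^d → ℝ^d be differentiable at every point of F(Ω) with derivative Dφ, let p : ℝ^d → ℝ, and set ψ = φ ∘ F, q = p ∘ F. Then ∫_{F(Ω)} p(y) · tr(Dφ(y)) dy = ∫_Ω q(x) · tr(Dψ(x)·(DF(x))⁻¹) · det(DF(x)) dx, where Dψ(x) denotes the matrix of the derivative of ψ within Ω at x. -/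
open MeasureTheory Filter Metric Set
open scoped Matrix Topology ENNReal

/-- At a Lebesgue density point of a set `S` in Euclidean space, the tangent cone of `S`
is everything. -/
lemma tangentCone_univ_of_density {d : ℕ}
    {S : Set (EuclideanSpace ℝ (Fin d))} {x : EuclideanSpace ℝ (Fin d)}
    (hx : Tendsto (fun r => volume (S ∩ closedBall x r) / volume (closedBall x r))
      (𝓝[>] (0:ℝ)) (𝓝 1)) (v : EuclideanSpace ℝ (Fin d)) :
    v ∈ tangentConeAt ℝ S x := by
  classical
  -- Key claim: for every ε > 0, for all small r > 0 the set
  -- `S ∩ closedBall (x + r • v) (r * ε)` is nonempty.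
  have K : ∀ ε : ℝ, 0 < ε → ∃ δ : ℝ, 0 < δ ∧ ∀ r : ℝ, 0 < r → r ≤ δ →
      (S ∩ closedBall (x + r • v) (r * ε)).Nonempty := by
    intro ε hε
    set R : ℝ := ‖v‖ + ε with hRdef
    have hR : 0 < R := by positivity
    set c : ℝ≥0∞ := ENNReal.ofReal ((ε / R) ^ d) with hcdef
    have hc0 : c ≠ 0 := by
      simp only [hcdef, ne_eq, ENNReal.ofReal_eq_zero, not_le]
      positivity
    have hlt : (1 : ℝ≥0∞) - c < 1 :=
      ENNReal.sub_lt_self ENNReal.one_ne_top one_ne_zero hc0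
    have h1 : ∀ᶠ r in 𝓝[>] (0:ℝ),
        (1:ℝ≥0∞) - c < volume (S ∩ closedBall x r) / volume (closedBall x r) :=
      hx.eventually (lt_mem_nhds hlt)
    obtain ⟨δ, hδmem, hδ⟩ := mem_nhdsGT_iff_exists_Ioc_subset.1 h1
    have hδpos : (0:ℝ) < δ := hδmem
    refine ⟨δ / R, by positivity, fun r hr hrδ => ?_⟩
    by_contra hemp
    rw [Set.not_nonempty_iff_eq_empty] at hemp
    set s : ℝ := r * R with hsdef
    have hspos : 0 < s := by positivity
    have hsδ : s ≤ δ := by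
      rw [hsdef]
      calc r * R ≤ (δ / R) * R := by
            exact mul_le_mul_of_nonneg_right hrδ hR.le
        _ = δ := by field_simp
    have hsub : closedBall (x + r • v) (r * ε) ⊆ closedBall x s := by
      apply closedBall_subset_closedBall'
      have : dist (x + r • v) x = r * ‖v‖ := by
        rw [dist_eq_norm]
        simp [norm_smul, abs_of_pos hr]
      rw [this, hsdef, hRdef]
      ring_nf
      nlinarith [hr.le, hε.le, norm_nonneg v]
    -- measure computations
    have hBn : volume (closedBall (x + r • v) (r * ε)) = c * volume (closedBall x s) := by
      rw [MeasureTheory.Measure.addHaar_closedBall _ _ (by positivity : (0:ℝ) ≤ r * ε),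
        MeasureTheory.Measure.addHaar_closedBall _ _ hspos.le,
        finrank_euclideanSpace_fin, hcdef, ← mul_assoc, ← ENNReal.ofReal_mul (by positivity)]
      congr 2
      rw [hsdef, ← mul_pow]
      congr 1
      field_simp
    have hBfin : volume (closedBall x s) ≠ ∞ := measure_closedBall_lt_top.ne
    have hB0 : volume (closedBall x s) ≠ 0 := (measure_closedBall_pos _ _ hspos).ne'
    have hsubset2 : S ∩ closedBall x s ⊆
        closedBall x s \ closedBall (x + r • v) (r * ε) := by
      intro y hy
      refine ⟨hy.2, fun hmem => ?_⟩
      have : y ∈ S ∩ closedBall (x + r • v) (r * ε) := ⟨hy.1, hmem⟩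
      rw [hemp] at this
      exact this
    have hmeas : volume (S ∩ closedBall x s)
        ≤ volume (closedBall x s) - volume (closedBall (x + r • v) (r * ε)) := by
      refine le_trans (measure_mono hsubset2) (le_of_eq ?_)
      exact measure_diff hsub measurableSet_closedBall.nullMeasurableSet
        measure_closedBall_lt_top.ne
    have hratio : volume (S ∩ closedBall x s) / volume (closedBall x s)
        ≤ 1 - c := by
      have h2 : volume (closedBall x s) - volume (closedBall (x + r • v) (r * ε))
          = (1 - c) * volume (closedBall x s) := by
        rw [hBn, ENNReal.sub_mul (fun _ _ => hBfin), one_mul]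
      calc volume (S ∩ closedBall x s) / volume (closedBall x s)
          ≤ ((1 - c) * volume (closedBall x s)) / volume (closedBall x s) := by
            rw [← h2]
            exact ENNReal.div_le_div_right hmeas _
        _ = 1 - c := by
            rw [mul_div_assoc, ENNReal.div_self hB0 hBfin, mul_one]
    have := hδ ⟨hspos, hsδ⟩
    exact absurd hratio (not_le.2 this)
  -- S is nonempty
  have hS : S.Nonempty := by
    obtain ⟨δ, hδpos, hδ⟩ := K 1 one_pos
    obtain ⟨y, hy, -⟩ := hδ δ hδpos le_rfl
    exact ⟨y, hy⟩
  -- the scaling sequence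
  set c : ℕ → ℝ := fun n => (n : ℝ) + 1 with hcdef
  have hcpos : ∀ n, (0:ℝ) < c n := fun n => by positivity
  set w : ℕ → EuclideanSpace ℝ (Fin d) := fun n => x + (c n)⁻¹ • v with hwdef
  -- the scaled infDist tends to zero
  have L : Tendsto (fun n : ℕ => c n * infDist (w n) S) atTop (𝓝 0) := by
    rw [NormedAddCommGroup.tendsto_nhds_zero]
    intro ε hε
    obtain ⟨δ, hδpos, hδ⟩ := K (ε / 2) (by positivity)
    have hinv : Tendsto (fun n : ℕ => (c n)⁻¹) atTop (𝓝 0) := by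
      simpa [hcdef, one_div] using tendsto_one_div_add_atTop_nhds_zero_nat (𝕜 := ℝ)
    filter_upwards [hinv.eventually (eventually_le_nhds hδpos)] with n hn
    obtain ⟨y, hyS, hyd⟩ := hδ ((c n)⁻¹) (by positivity) hn
    have h1 : infDist (w n) S ≤ (c n)⁻¹ * (ε / 2) :=
      le_trans (infDist_le_dist_of_mem hyS) (by simpa [hwdef, dist_comm] using hyd)
    have h2 : c n * infDist (w n) S ≤ ε / 2 := by
      have := mul_le_mul_of_nonneg_left h1 (hcpos n).le
      rwa [← mul_assoc, mul_inv_cancel₀ (hcpos n).ne', one_mul] at this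
    have h0 : 0 ≤ c n * infDist (w n) S :=
      mul_nonneg (hcpos n).le infDist_nonneg
    rw [Real.norm_of_nonneg h0]
    exact h2.trans_lt (by linarith)
  -- choose approximating points
  have hy : ∀ n : ℕ, ∃ y ∈ S, dist (w n) y < infDist (w n) S + (c n)⁻¹ * (c n)⁻¹ := by
    intro n
    refine (infDist_lt_iff hS).1 ?_
    have : (0:ℝ) < (c n)⁻¹ * (c n)⁻¹ := by positivity
    linarith
  choose y hyS hyd using hy
  refine mem_tangentConeAt_iff_exists_seq_norm_tendsto_atTop.2 ⟨c, fun n => y n - x, ?_, ?_, ?_⟩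
  swap
  · filter_upwards with n
    simpa using hyS n
  · have : Tendsto c atTop atTop :=
      tendsto_atTop_add_const_right atTop 1 tendsto_natCast_atTop_atTop
    refine Tendsto.congr (fun n => ?_) this
    rw [Real.norm_of_nonneg (hcpos n).le]
  · rw [tendsto_iff_norm_sub_tendsto_zero]
    have bound : ∀ n, ‖c n • (y n - x) - v‖ ≤ c n * infDist (w n) S + (c n)⁻¹ := by
      intro n
      have heq : c n • (y n - x) - v = c n • (y n - w n) := by
        have hwn : w n = x + (c n)⁻¹ • v := rfl
        rw [hwn, smul_sub, smul_sub, smul_add, smul_inv_smul₀ (hcpos n).ne']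
        abel
      rw [heq, norm_smul, Real.norm_of_nonneg (hcpos n).le]
      have hd : ‖y n - w n‖ ≤ infDist (w n) S + (c n)⁻¹ * (c n)⁻¹ := by
        rw [← dist_eq_norm, dist_comm]
        exact (hyd n).le
      calc c n * ‖y n - w n‖ ≤ c n * (infDist (w n) S + (c n)⁻¹ * (c n)⁻¹) :=
            mul_le_mul_of_nonneg_left hd (hcpos n).le
        _ = c n * infDist (w n) S + (c n)⁻¹ := by
            rw [mul_add, ← mul_assoc, mul_inv_cancel₀ (hcpos n).ne', one_mul]
    have hinv : Tendsto (fun n : ℕ => (c n)⁻¹) atTop (𝓝 0) := by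
      simpa [hcdef, one_div] using tendsto_one_div_add_atTop_nhds_zero_nat (𝕜 := ℝ)
    have hsum : Tendsto (fun n => c n * infDist (w n) S + (c n)⁻¹) atTop (𝓝 0) := by
      simpa using L.add hinv
    exact squeeze_zero (fun n => norm_nonneg _) bound hsum

/-- Almost every point of a set in Euclidean space is a point of unique differentiability
within the set. -/
lemma ae_uniqueDiffWithinAt {d : ℕ} (S : Set (EuclideanSpace ℝ (Fin d))) :
    ∀ᵐ x ∂(volume.restrict S), UniqueDiffWithinAt ℝ S x := by
  filter_upwards [Besicovitch.ae_tendsto_measure_inter_div volume S] with x hx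
  have ht : ∀ v, v ∈ tangentConeAt ℝ S x := tangentCone_univ_of_density hx
  constructor
  · rw [Set.eq_univ_iff_forall.2 ht]
    simp
  · obtain ⟨c, dd, hc, hmem, hcd⟩ := mem_tangentConeAt_iff_exists_seq_norm_tendsto_atTop.1 (ht 0)
    have hd0 : Tendsto dd atTop (𝓝 0) := tangentConeAt.lim_zero atTop hc hcd
    have : Tendsto (fun n => x + dd n) atTop (𝓝 x) := by
      simpa using tendsto_const_nhds.add hd0
    exact mem_closure_of_tendsto this hmem

/-- Determinant of the continuous linear map associated with a matrix. -/
lemma det_toEuclideanCLM {d : ℕ} (M : Matrix (Fin d) (Fin d) ℝ) :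
    (Matrix.toEuclideanCLM (𝕜 := ℝ) M).det = M.det := by
  change LinearMap.det _ = _
  rw [Matrix.coe_toEuclideanCLM_eq_toEuclideanLin]
  rw [show Matrix.toEuclideanLin (𝕜 := ℝ) (m := Fin d) (n := Fin d)
      = Matrix.toLin (PiLp.basisFun 2 ℝ (Fin d)) (PiLp.basisFun 2 ℝ (Fin d)) from rfl]
  exact LinearMap.det_toLin _ _

set_option synthInstance.maxHeartbeats 1000000 in
/-- Pullback of the pressure/divergence term: for `F` injective on `Ω` with invertible
derivative matrices `DF x` (`det DF x > 0`), `φ` differentiable on `F '' Ω` with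
derivative matrix `Dφ`, `p : ℝ^d → ℝ`, and `ψ = φ ∘ F`, `q = p ∘ F`, the composition
`ψ` has derivative matrix `Dψ` within `Ω` and
`∫_{F(Ω)} p tr (Dφ) = ∫_Ω q tr (Dψ (DF)⁻¹) det (DF)`. -/
theorem integral_image_pressure_divergence_eq
    (d : ℕ) (hd : 1 ≤ d)
    (Ω : Set (EuclideanSpace ℝ (Fin d))) (hΩ : MeasurableSet Ω)
    (F : EuclideanSpace ℝ (Fin d) → EuclideanSpace ℝ (Fin d))
    (DF : EuclideanSpace ℝ (Fin d) → Matrix (Fin d) (Fin d) ℝ)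
    (hinj : Set.InjOn F Ω)
    (hF : ∀ x ∈ Ω, HasFDerivWithinAt F (Matrix.toEuclideanCLM (𝕜 := ℝ) (DF x)) Ω x)
    (hDFinv : ∀ x ∈ Ω, IsUnit (DF x))
    (hdet : ∀ x ∈ Ω, 0 < (DF x).det)
    (φ : EuclideanSpace ℝ (Fin d) → EuclideanSpace ℝ (Fin d))
    (Dφ : EuclideanSpace ℝ (Fin d) → Matrix (Fin d) (Fin d) ℝ)
    (hφ : ∀ y ∈ F '' Ω, HasFDerivAt φ (Matrix.toEuclideanCLM (𝕜 := ℝ) (Dφ y)) y)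
    (p : EuclideanSpace ℝ (Fin d) → ℝ)
    (ψ : EuclideanSpace ℝ (Fin d) → EuclideanSpace ℝ (Fin d)) (hψ : ψ = φ ∘ F)
    (q : EuclideanSpace ℝ (Fin d) → ℝ) (hq : q = p ∘ F)
    (Dψ : EuclideanSpace ℝ (Fin d) → Matrix (Fin d) (Fin d) ℝ)
    (hDψ : ∀ x ∈ Ω, HasFDerivWithinAt ψ (Matrix.toEuclideanCLM (𝕜 := ℝ) (Dψ x)) Ω x) :
    ∫ y in F '' Ω, p y * (Dφ y).trace
      = ∫ x in Ω, q x * (Dψ x * (DF x)⁻¹).trace * (DF x).det := by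
  rw [MeasureTheory.integral_image_eq_integral_abs_det_fderiv_smul volume hΩ
    (fun x hx => hF x hx) hinj (fun y => p y * (Dφ y).trace)]
  refine integral_congr_ae ?_
  filter_upwards [ae_uniqueDiffWithinAt Ω, ae_restrict_mem hΩ] with x hux hxΩ
  have hdetx : IsUnit (DF x).det := isUnit_iff_ne_zero.2 (hdet x hxΩ).ne'
  have h1 : HasFDerivWithinAt ψ
      ((Matrix.toEuclideanCLM (𝕜 := ℝ) (Dφ (F x))).comp
        (Matrix.toEuclideanCLM (𝕜 := ℝ) (DF x))) Ω x := by
    rw [hψ]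
    exact (hφ (F x) ⟨x, hxΩ, rfl⟩).comp_hasFDerivWithinAt x (hF x hxΩ)
  have h3 : Matrix.toEuclideanCLM (𝕜 := ℝ) (Dψ x)
      = Matrix.toEuclideanCLM (𝕜 := ℝ) (Dφ (F x) * DF x) := by
    rw [map_mul]
    exact hux.eq (hDψ x hxΩ) h1
  have hM : Dψ x = Dφ (F x) * DF x :=
    (Matrix.toEuclideanCLM (n := Fin d) (𝕜 := ℝ)).injective h3
  have htr : (Dψ x * (DF x)⁻¹).trace = (Dφ (F x)).trace := by
    rw [hM, Matrix.mul_nonsing_inv_cancel_right _ _ hdetx]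
  rw [det_toEuclideanCLM, abs_of_pos (hdet x hxΩ), htr, hq, smul_eq_mul]
  simp only [Function.comp_apply]
  ring
end
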